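/- For every Borel probability measure μ on ℝ with μ([0,1)) = 1, there exists at least one exponent α ≥ 0 such that L_μ(α) = α, where L_μ is the Legendre spectrum of μ. -/

import Mathlib

open MeasureTheory Filter Set Metric
open scoped ENNReal NNReal Topology

/-- Lower local dimension of a measure at a point (real-valued liminf). -/
noncomputable def locDim {X : Type*} [MetricSpace X] [MeasurableSpace X]
    (μ : Measure X) (x : X) : ℝ :=
  liminf (fun r : ℝ => Real.log (μ (ball x r)).toReal / Real.log r)
    (nhdsWithin 0 (Ioi 0))

/-- Topological support of a measure on a metric space. -/
def msupp {X : Type*} [MetricSpace X] [MeasurableSpace X] (μ : Measure X) : Set X :=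
  {x | ∀ r > 0, 0 < μ (ball x r)}

/-- The dyadic interval `[k/2^j, (k+1)/2^j)`. -/
def dyadicI (j k : ℕ) : Set ℝ := Ico ((k : ℝ) / 2 ^ j) ((k + 1 : ℝ) / 2 ^ j)

/-- `Σ_{I ∈ G_j, μ I > 0} μ(I)^q` over the dyadic intervals of generation `j`. -/
noncomputable def dyadicSum (μ : Measure ℝ) (j : ℕ) (q : ℝ) : ℝ :=
  ∑ k ∈ Finset.range (2 ^ j),
    if μ (dyadicI j k) = 0 then 0 else (μ (dyadicI j k)).toReal ^ q

/-- The sequence whose liminf defines the scaling function `τ_μ(q)`. -/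
noncomputable def tauSeq (μ : Measure ℝ) (q : ℝ) (j : ℕ) : ℝ :=
  (-1 : ℝ) / j * Real.logb 2 (dyadicSum μ j q)

/-- The scaling function `τ_μ(q) = liminf_j (-1/j) log₂ Σ_{I ∈ G_j, μ I > 0} μ(I)^q`,
taken in the extended reals. -/
noncomputable def tau (μ : Measure ℝ) (q : ℝ) : EReal :=
  liminf (fun j : ℕ => (tauSeq μ q j : EReal)) atTop

/-- The Legendre spectrum `L_μ(α) = inf_{q ∈ ℝ} (qα - τ_μ(q))`, valued in the
extended reals (`⊥` meaning that the infimum is not bounded below). -/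
noncomputable def legendre (μ : Measure ℝ) (α : ℝ) : EReal :=
  ⨅ q : ℝ, ((q * α : ℝ) : EReal) - tau μ q

set_option linter.unusedSectionVars false

lemma dyadic_union (j : ℕ) : ⋃ k ∈ Finset.range (2 ^ j), dyadicI j k = Ico (0:ℝ) 1 := by
  ext x
  simp only [mem_iUnion, Finset.mem_range, dyadicI, mem_Ico, exists_prop]
  constructor
  · rintro ⟨k, hk, h1, h2⟩
    have h2j : (0:ℝ) < 2 ^ j := by positivity
    refine ⟨le_trans (by positivity) h1, lt_of_lt_of_le h2 ?_⟩
    rw [div_le_one h2j]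
    have : (k:ℝ) + 1 ≤ (2:ℝ) ^ j := by
      have : (k + 1 : ℕ) ≤ 2 ^ j := hk
      exact_mod_cast this
    simpa using this
  · rintro ⟨h0, h1⟩
    have h2j : (0:ℝ) < 2 ^ j := by positivity
    refine ⟨⌊x * 2 ^ j⌋₊, ?_, ?_, ?_⟩
    · rw [Nat.floor_lt (by positivity)]
      calc x * 2 ^ j < 1 * 2 ^ j := by gcongr
        _ = ((2 ^ j : ℕ) : ℝ) := by push_cast; ring
    · rw [div_le_iff₀ h2j]
      exact Nat.floor_le (by positivity)
    · rw [lt_div_iff₀ h2j]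
      exact Nat.lt_floor_add_one _

lemma dyadic_disjoint (j : ℕ) :
    (↑(Finset.range (2 ^ j)) : Set ℕ).PairwiseDisjoint (dyadicI j) := by
  intro k _ k' _ hne
  have key : ∀ a b : ℕ, a < b → Disjoint (dyadicI j a) (dyadicI j b) := by
    intro a b hab
    rw [dyadicI, dyadicI, Set.Ico_disjoint_Ico]
    refine le_trans (min_le_left _ _) (le_trans ?_ (le_max_right _ _))
    have h2j : (0:ℝ) < 2 ^ j := by positivity
    gcongr
    exact_mod_cast hab
  rcases lt_or_gt_of_ne hne with h | h
  · exact key _ _ h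
  · exact (key _ _ h).symm

section Bounds
variable (μ : Measure ℝ) [IsProbabilityMeasure μ] (hμ : μ (Set.Ico 0 1) = 1)
include hμ

lemma sum_measure_dyadic (j : ℕ) :
    ∑ k ∈ Finset.range (2 ^ j), μ (dyadicI j k) = 1 := by
  rw [← measure_biUnion_finset (dyadic_disjoint j) (fun k _ => measurableSet_Ico),
    dyadic_union, hμ]

lemma sum_toReal_dyadic (j : ℕ) :
    ∑ k ∈ Finset.range (2 ^ j), (μ (dyadicI j k)).toReal = 1 := by
  rw [← ENNReal.toReal_sum (fun k _ => measure_ne_top μ _), sum_measure_dyadic μ hμ j,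
    ENNReal.toReal_one]

omit hμ in
lemma toReal_dyadic_le_one (j k : ℕ) : (μ (dyadicI j k)).toReal ≤ 1 := by
  simpa using ENNReal.toReal_mono ENNReal.one_ne_top (prob_le_one (μ := μ) (s := dyadicI j k))

lemma exists_big (j : ℕ) :
    ∃ k ∈ Finset.range (2 ^ j), ((2:ℝ) ^ j)⁻¹ ≤ (μ (dyadicI j k)).toReal := by
  by_contra hcon
  push_neg at hcon
  have h1 : (1:ℝ) = ∑ k ∈ Finset.range (2 ^ j), (μ (dyadicI j k)).toReal :=
    (sum_toReal_dyadic μ hμ j).symm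
  have h2 : ∑ k ∈ Finset.range (2 ^ j), (μ (dyadicI j k)).toReal
      < ∑ k ∈ Finset.range (2 ^ j), ((2:ℝ) ^ j)⁻¹ := by
    refine Finset.sum_lt_sum_of_nonempty ?_ hcon
    exact Finset.nonempty_range_iff.mpr (by positivity)
  rw [Finset.sum_const, Finset.card_range, nsmul_eq_mul] at h2
  push_cast at h2
  rw [mul_inv_cancel₀ (by positivity : ((2:ℝ) ^ j) ≠ 0)] at h2
  linarith [h1 ▸ h2]

lemma dyadicSum_ge_one {q : ℝ} (hq : q ≤ 1) (j : ℕ) : 1 ≤ dyadicSum μ j q := by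
  have := sum_toReal_dyadic μ hμ j
  rw [← this]
  unfold dyadicSum
  refine Finset.sum_le_sum fun k _ => ?_
  by_cases h : μ (dyadicI j k) = 0
  · simp [h]
  · rw [if_neg h]
    have hpos : 0 < (μ (dyadicI j k)).toReal :=
      ENNReal.toReal_pos h (measure_ne_top μ _)
    calc (μ (dyadicI j k)).toReal = (μ (dyadicI j k)).toReal ^ (1:ℝ) := by
          rw [Real.rpow_one]
      _ ≤ (μ (dyadicI j k)).toReal ^ q :=
          Real.rpow_le_rpow_of_exponent_ge hpos (toReal_dyadic_le_one μ j k) hq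

lemma dyadicSum_le_card {q : ℝ} (hq : 0 ≤ q) (j : ℕ) : dyadicSum μ j q ≤ (2:ℝ) ^ j := by
  unfold dyadicSum
  calc ∑ k ∈ Finset.range (2 ^ j), (if μ (dyadicI j k) = 0 then 0
        else (μ (dyadicI j k)).toReal ^ q)
      ≤ ∑ _k ∈ Finset.range (2 ^ j), (1:ℝ) := by
        refine Finset.sum_le_sum fun k _ => ?_
        by_cases h : μ (dyadicI j k) = 0
        · simp [h]
        · rw [if_neg h]
          exact Real.rpow_le_one (ENNReal.toReal_nonneg) (toReal_dyadic_le_one μ j k) hq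
    _ = (2:ℝ) ^ j := by simp

lemma dyadicSum_le_one {q : ℝ} (hq : 1 ≤ q) (j : ℕ) : dyadicSum μ j q ≤ 1 := by
  have := sum_toReal_dyadic μ hμ j
  rw [← this]
  unfold dyadicSum
  refine Finset.sum_le_sum fun k _ => ?_
  by_cases h : μ (dyadicI j k) = 0
  · simp [h]
  · rw [if_neg h]
    have hpos : 0 < (μ (dyadicI j k)).toReal :=
      ENNReal.toReal_pos h (measure_ne_top μ _)
    calc (μ (dyadicI j k)).toReal ^ q ≤ (μ (dyadicI j k)).toReal ^ (1:ℝ) :=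
          Real.rpow_le_rpow_of_exponent_ge hpos (toReal_dyadic_le_one μ j k) hq
      _ = (μ (dyadicI j k)).toReal := Real.rpow_one _

lemma dyadicSum_pos_ge {q : ℝ} (hq : 0 ≤ q) (j : ℕ) :
    ((2:ℝ) ^ j)⁻¹ ^ q ≤ dyadicSum μ j q := by
  obtain ⟨k, hk, hbig⟩ := exists_big μ hμ j
  have hne : μ (dyadicI j k) ≠ 0 := by
    intro h
    rw [h, ENNReal.toReal_zero] at hbig
    have : (0:ℝ) < ((2:ℝ) ^ j)⁻¹ := by positivity
    linarith
  have hterm : ((2:ℝ) ^ j)⁻¹ ^ q ≤ (μ (dyadicI j k)).toReal ^ q :=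
    Real.rpow_le_rpow (by positivity) hbig hq
  have h0 : (if μ (dyadicI j k) = 0 then (0:ℝ) else (μ (dyadicI j k)).toReal ^ q)
      ≤ dyadicSum μ j q := by
    unfold dyadicSum
    refine Finset.single_le_sum
      (f := fun i => if μ (dyadicI j i) = 0 then (0:ℝ) else (μ (dyadicI j i)).toReal ^ q)
      (fun i _ => ?_) hk
    by_cases h : μ (dyadicI j i) = 0
    · simp [h]
    · simp only [if_neg h]; positivity
  rw [if_neg hne] at h0
  exact le_trans hterm h0

lemma dyadicSum_pos {q : ℝ} (hq : 0 ≤ q) (j : ℕ) : 0 < dyadicSum μ j q :=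
  lt_of_lt_of_le (by positivity) (dyadicSum_pos_ge μ hμ hq j)

lemma dyadicSum_one (j : ℕ) : dyadicSum μ j 1 = 1 := by
  have h := sum_toReal_dyadic μ hμ j
  unfold dyadicSum
  have heq : ∀ k ∈ Finset.range (2 ^ j),
      (if μ (dyadicI j k) = 0 then (0:ℝ) else (μ (dyadicI j k)).toReal ^ (1:ℝ))
        = (μ (dyadicI j k)).toReal := by
    intro k _
    by_cases hk : μ (dyadicI j k) = 0
    · simp [hk]
    · rw [if_neg hk, Real.rpow_one]
  rw [Finset.sum_congr rfl heq]
  exact h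

end Bounds

section TauSeq
variable (μ : Measure ℝ) [IsProbabilityMeasure μ] (hμ : μ (Set.Ico 0 1) = 1)
include hμ

lemma one_lt_two' : (1:ℝ) < 2 := one_lt_two

lemma tauSeq_nonpos {q : ℝ} (hq : q ≤ 1) (j : ℕ) : tauSeq μ q j ≤ 0 := by
  unfold tauSeq
  have h1 : 0 ≤ Real.logb 2 (dyadicSum μ j q) :=
    Real.logb_nonneg one_lt_two (dyadicSum_ge_one μ hμ hq j)
  have h2 : (-1 : ℝ) / j ≤ 0 := by
    apply div_nonpos_of_nonpos_of_nonneg <;> simp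
  exact mul_nonpos_of_nonpos_of_nonneg h2 h1

lemma tauSeq_ge_neg_one {q : ℝ} (hq0 : 0 ≤ q) (j : ℕ) : -1 ≤ tauSeq μ q j := by
  unfold tauSeq
  rcases Nat.eq_zero_or_pos j with hj | hj
  · simp [hj]
  have hjR : (0:ℝ) < j := by exact_mod_cast hj
  have h1 : Real.logb 2 (dyadicSum μ j q) ≤ j := by
    calc Real.logb 2 (dyadicSum μ j q) ≤ Real.logb 2 ((2:ℝ) ^ j) := by
          rw [Real.logb_le_logb one_lt_two (dyadicSum_pos μ hμ hq0 j) (by positivity)]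
          exact dyadicSum_le_card μ hμ hq0 j
      _ = j := by rw [Real.logb_pow, Real.logb_self_eq_one one_lt_two]; ring
  rw [div_mul_eq_mul_div, neg_one_mul, neg_div, neg_le_neg_iff]
  rw [div_le_one hjR]
  exact h1

lemma tauSeq_nonneg {q : ℝ} (hq : 1 ≤ q) (j : ℕ) : 0 ≤ tauSeq μ q j := by
  unfold tauSeq
  have h1 : Real.logb 2 (dyadicSum μ j q) ≤ 0 := by
    refine Real.logb_nonpos one_lt_two ?_ (dyadicSum_le_one μ hμ hq j)
    exact le_of_lt (dyadicSum_pos μ hμ (le_trans zero_le_one hq) j)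
  have h2 : (-1 : ℝ) / j ≤ 0 := by
    apply div_nonpos_of_nonpos_of_nonneg <;> simp
  nlinarith

lemma tauSeq_le {q : ℝ} (hq : 0 ≤ q) (j : ℕ) : tauSeq μ q j ≤ q := by
  unfold tauSeq
  rcases Nat.eq_zero_or_pos j with hj | hj
  · simp [hj, hq]
  have hjR : (0:ℝ) < j := by exact_mod_cast hj
  have h1 : -(j * q) ≤ Real.logb 2 (dyadicSum μ j q) := by
    calc -(j * q) = Real.logb 2 (((2:ℝ) ^ j)⁻¹ ^ q) := by
          rw [Real.logb_rpow_eq_mul_logb_of_pos (by positivity), Real.logb_inv,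
            Real.logb_pow, Real.logb_self_eq_one one_lt_two]
          ring
      _ ≤ Real.logb 2 (dyadicSum μ j q) := by
          rw [Real.logb_le_logb one_lt_two (by positivity) (dyadicSum_pos μ hμ hq j)]
          exact dyadicSum_pos_ge μ hμ hq j
  have heq : (-1:ℝ)/j * Real.logb 2 (dyadicSum μ j q)
      = -Real.logb 2 (dyadicSum μ j q) / j := by ring
  rw [heq, div_le_iff₀ hjR]
  nlinarith [h1]

end TauSeq

lemma holder_sum {ι : Type*} (s : Finset ι) (f g : ι → ℝ)
    (hf : ∀ i ∈ s, 0 ≤ f i) (hg : ∀ i ∈ s, 0 ≤ g i) {w : ℝ} (hw0 : 0 ≤ w) (hw1 : w ≤ 1)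
    (hA : 0 < ∑ i ∈ s, f i) (hB : 0 < ∑ i ∈ s, g i) :
    ∑ i ∈ s, (f i) ^ w * (g i) ^ (1 - w) ≤ (∑ i ∈ s, f i) ^ w * (∑ i ∈ s, g i) ^ (1 - w) := by
  set A := ∑ i ∈ s, f i with hAdef
  set B := ∑ i ∈ s, g i with hBdef
  have key : ∀ i ∈ s, (f i) ^ w * (g i) ^ (1 - w)
      ≤ A ^ w * B ^ (1 - w) * (w * (f i / A) + (1 - w) * (g i / B)) := by
    intro i hi
    have h1 : (f i) ^ w * (g i) ^ (1 - w)
        = A ^ w * B ^ (1 - w) * ((f i / A) ^ w * (g i / B) ^ (1 - w)) := by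
      rw [Real.div_rpow (hf i hi) hA.le, Real.div_rpow (hg i hi) hB.le]
      field_simp
    rw [h1]
    have h2 : (f i / A) ^ w * (g i / B) ^ (1 - w) ≤ w * (f i / A) + (1 - w) * (g i / B) :=
      Real.geom_mean_le_arith_mean2_weighted hw0 (by linarith)
        (div_nonneg (hf i hi) hA.le) (div_nonneg (hg i hi) hB.le) (by ring)
    have h3 : (0:ℝ) ≤ A ^ w * B ^ (1 - w) := by positivity
    exact mul_le_mul_of_nonneg_left h2 h3
  calc ∑ i ∈ s, (f i) ^ w * (g i) ^ (1 - w)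
      ≤ ∑ i ∈ s, A ^ w * B ^ (1 - w) * (w * (f i / A) + (1 - w) * (g i / B)) :=
        Finset.sum_le_sum key
    _ = A ^ w * B ^ (1 - w) * (w * (A / A) + (1 - w) * (B / B)) := by
        rw [← Finset.mul_sum]
        congr 1
        rw [Finset.sum_add_distrib, ← Finset.mul_sum, ← Finset.mul_sum, ← Finset.sum_div,
          ← Finset.sum_div]
    _ = A ^ w * B ^ (1 - w) := by
        rw [div_self hA.ne', div_self hB.ne']
        ring

section Conc
variable (μ : Measure ℝ) [IsProbabilityMeasure μ] (hμ : μ (Set.Ico 0 1) = 1)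

lemma dyadicSum_eq_filter (j : ℕ) (r : ℝ) :
    dyadicSum μ j r = ∑ k ∈ (Finset.range (2 ^ j)).filter (fun k => μ (dyadicI j k) ≠ 0),
      (μ (dyadicI j k)).toReal ^ r := by
  rw [Finset.sum_filter]
  unfold dyadicSum
  refine Finset.sum_congr rfl fun k _ => ?_
  by_cases h : μ (dyadicI j k) = 0 <;> simp [h]

include hμ

lemma sum_filter_toReal (j : ℕ) :
    ∑ k ∈ (Finset.range (2 ^ j)).filter (fun k => μ (dyadicI j k) ≠ 0),
      (μ (dyadicI j k)).toReal = 1 := by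
  rw [Finset.sum_filter]
  rw [← sum_toReal_dyadic μ hμ j]
  refine Finset.sum_congr rfl fun k _ => ?_
  by_cases h : μ (dyadicI j k) = 0 <;> simp [h]

lemma conc {q p : ℝ} (hq : q < 1) (hp : 1 < p) (j : ℕ) :
    (p - 1) * tauSeq μ q j + (1 - q) * tauSeq μ p j ≤ 0 := by
  set l : ℝ := (p - 1) / (p - q) with hl
  have hpq : (0:ℝ) < p - q := by linarith
  have hl0 : 0 ≤ l := div_nonneg (by linarith) hpq.le
  have hl1 : l ≤ 1 := by rw [hl, div_le_one hpq]; linarith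
  have hl1' : 1 - l = (1 - q) / (p - q) := by rw [hl]; field_simp; ring
  set A := dyadicSum μ j q with hA
  set B := dyadicSum μ j p with hB
  have hApos : 0 < A := lt_of_lt_of_le zero_lt_one (dyadicSum_ge_one μ hμ hq.le j)
  have hBpos : 0 < B := dyadicSum_pos μ hμ (by linarith) j
  -- main Hölder inequality
  have hmain : 1 ≤ A ^ l * B ^ (1 - l) := by
    set S := (Finset.range (2 ^ j)).filter (fun k => μ (dyadicI j k) ≠ 0) with hS
    have hsum : ∑ k ∈ S, (μ (dyadicI j k)).toReal = 1 := sum_filter_toReal μ hμ j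
    have hAeq : A = ∑ k ∈ S, ((μ (dyadicI j k)).toReal ^ q) := dyadicSum_eq_filter μ j q
    have hBeq : B = ∑ k ∈ S, ((μ (dyadicI j k)).toReal ^ p) := dyadicSum_eq_filter μ j p
    have hterm : ∀ k ∈ S, (μ (dyadicI j k)).toReal
        = ((μ (dyadicI j k)).toReal ^ q) ^ l * ((μ (dyadicI j k)).toReal ^ p) ^ (1 - l) := by
      intro k hk
      have hkpos : 0 < (μ (dyadicI j k)).toReal := by
        rw [hS, Finset.mem_filter] at hk
        exact ENNReal.toReal_pos hk.2 (measure_ne_top μ _)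
      symm
      rw [← Real.rpow_mul hkpos.le, ← Real.rpow_mul hkpos.le, ← Real.rpow_add hkpos]
      have hexp : q * l + p * (1 - l) = 1 := by
        rw [hl1', hl]
        field_simp
        ring
      rw [hexp, Real.rpow_one]
    calc (1:ℝ) = ∑ k ∈ S, (μ (dyadicI j k)).toReal := hsum.symm
      _ = ∑ k ∈ S, ((μ (dyadicI j k)).toReal ^ q) ^ l * ((μ (dyadicI j k)).toReal ^ p) ^ (1 - l) :=
          Finset.sum_congr rfl hterm
      _ ≤ A ^ l * B ^ (1 - l) := by
          rw [hAeq, hBeq]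
          refine holder_sum S _ _ (fun i _ => ?_) (fun i _ => ?_) hl0 hl1 ?_ ?_
          · positivity
          · positivity
          · rw [← hAeq]; exact hApos
          · rw [← hBeq]; exact hBpos
  -- take logarithms
  have hlog : 0 ≤ l * Real.logb 2 A + (1 - l) * Real.logb 2 B := by
    have h1 : Real.logb 2 1 ≤ Real.logb 2 (A ^ l * B ^ (1 - l)) := by
      rw [Real.logb_le_logb one_lt_two one_pos (by positivity)]
      exact hmain
    rw [Real.logb_one, Real.logb_mul (by positivity) (by positivity),
      Real.logb_rpow_eq_mul_logb_of_pos hApos, Real.logb_rpow_eq_mul_logb_of_pos hBpos] at h1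
    exact h1
  -- conclude
  have hb : 0 ≤ (p - 1) * Real.logb 2 A + (1 - q) * Real.logb 2 B := by
    have h1 : (p - 1) * Real.logb 2 A + (1 - q) * Real.logb 2 B
        = (p - q) * (l * Real.logb 2 A + (1 - l) * Real.logb 2 B) := by
      rw [hl1', hl]
      field_simp
    rw [h1]
    exact mul_nonneg hpq.le hlog
  have hj : (0:ℝ) ≤ 1 / j := by positivity
  have hgoal : (p - 1) * tauSeq μ q j + (1 - q) * tauSeq μ p j
      = -(1 / j * ((p - 1) * Real.logb 2 A + (1 - q) * Real.logb 2 B)) := by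
    unfold tauSeq
    rw [← hA, ← hB]
    ring
  rw [hgoal]
  simp only [neg_nonpos]  -- goal: -(..) ≤ 0
  exact mul_nonneg hj hb

end Conc

section Tau
variable (μ : Measure ℝ) [IsProbabilityMeasure μ] (hμ : μ (Set.Ico 0 1) = 1)
include hμ

lemma tau_one : tau μ 1 = 0 := by
  have h : ∀ j, tauSeq μ (1:ℝ) j = 0 := fun j => by
    unfold tauSeq
    rw [dyadicSum_one μ hμ j, Real.logb_one, mul_zero]
  unfold tau
  simp only [h, EReal.coe_zero]
  exact liminf_const 0

lemma tau_nonpos {q : ℝ} (hq : q ≤ 1) : tau μ q ≤ 0 := by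
  refine liminf_le_of_frequently_le' (Frequently.of_forall fun j => ?_)
  have := tauSeq_nonpos μ hμ hq j
  exact_mod_cast this

lemma tau_ge_zero {p : ℝ} (hp : 1 ≤ p) : 0 ≤ tau μ p := by
  refine le_liminf_of_le ?_ (Eventually.of_forall fun j => ?_)
  · isBoundedDefault
  · have := tauSeq_nonneg μ hμ hp j
    exact_mod_cast this

lemma tau_le_coe {p : ℝ} (hp : 0 ≤ p) : tau μ p ≤ (p : EReal) := by
  refine liminf_le_of_frequently_le' (Frequently.of_forall fun j => ?_)
  have := tauSeq_le μ hμ hp j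
  exact_mod_cast this

lemma tau_ge_neg_one {q : ℝ} (hq : 0 ≤ q) : ((-1 : ℝ) : EReal) ≤ tau μ q := by
  refine le_liminf_of_le ?_ (Eventually.of_forall fun j => ?_)
  · isBoundedDefault
  · have := tauSeq_ge_neg_one μ hμ hq j
    exact_mod_cast this

lemma tau_real {p : ℝ} (hp : 1 ≤ p) :
    ∃ r : ℝ, tau μ p = (r : EReal) ∧ 0 ≤ r ∧ r ≤ p := by
  have h0 : (0 : EReal) ≤ tau μ p := tau_ge_zero μ hμ hp
  have h1 : tau μ p ≤ (p : EReal) := tau_le_coe μ hμ (le_trans zero_le_one hp)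
  have hbot : tau μ p ≠ ⊥ := fun h => by simp [h] at h0
  have htop : tau μ p ≠ ⊤ := fun h => by
    rw [h] at h1
    exact (not_le.mpr (EReal.coe_lt_top p)) (top_le_iff.mp h1 ▸ le_refl _) |>.elim
  refine ⟨(tau μ p).toReal, (EReal.coe_toReal htop hbot).symm, ?_, ?_⟩
  · have := EReal.toReal_le_toReal h0 (by simp) htop
    simpa using this
  · have := EReal.toReal_le_toReal h1 hbot (by simp)
    simpa using this

lemma tau_key {q p : ℝ} (hq : q < 1) {r : ℝ} (hr : tau μ q = (r : EReal)) (hp : 1 < p) :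
    tau μ p ≤ (((p - 1) * (-r) / (1 - q) : ℝ) : EReal) := by
  obtain ⟨t, ht, ht0, htp⟩ := tau_real μ hμ hp.le
  rw [ht]
  rw [EReal.coe_le_coe_iff]
  have h1q : (0:ℝ) < 1 - q := by linarith
  have h1p : (0:ℝ) < p - 1 := by linarith
  refine le_of_forall_pos_le_add fun δ hδ => ?_
  set ε : ℝ := δ * (1 - q) / (p - 1) with hε
  have hεpos : 0 < ε := by positivity
  have hev : ∀ᶠ j in atTop, r - ε < tauSeq μ q j := by
    have hlt : ((r - ε : ℝ) : EReal) < tau μ q := by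
      rw [hr]
      exact_mod_cast (by linarith : r - ε < r)
    have h2 := eventually_lt_of_lt_liminf (u := fun j : ℕ => (tauSeq μ q j : EReal)) hlt
    filter_upwards [h2] with j hj
    exact_mod_cast hj
  have hev2 : ∀ᶠ j in atTop,
      (tauSeq μ p j : EReal) ≤ (((p - 1) * (ε - r) / (1 - q) : ℝ) : EReal) := by
    filter_upwards [hev] with j hj
    have hc := conc μ hμ hq hp j
    have : tauSeq μ p j ≤ (p - 1) * (ε - r) / (1 - q) := by
      rw [le_div_iff₀ h1q]
      nlinarith [hj, hc]
    exact_mod_cast this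
  have h3 : tau μ p ≤ (((p - 1) * (ε - r) / (1 - q) : ℝ) : EReal) :=
    liminf_le_of_frequently_le' hev2.frequently
  rw [ht, EReal.coe_le_coe_iff] at h3
  have heq : (p - 1) * (ε - r) / (1 - q) = (p - 1) * (-r) / (1 - q) + δ := by
    rw [hε]
    field_simp
    ring
  linarith [heq ▸ h3]

end Tau

theorem statement14_aux (μ : Measure ℝ) [IsProbabilityMeasure μ]
    (hμ : μ (Set.Ico 0 1) = 1) :
    ∃ α : ℝ, 0 ≤ α ∧ legendre μ α = (α : EReal) := by
  -- the candidate slope set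
  set S : Set ℝ := (fun p => (tau μ p).toReal / (p - 1)) '' Ioi 1 with hSdef
  -- τ(1/2) is a real number in [-1,0]
  have h2 : tau μ (1/2) ≤ 0 := tau_nonpos μ hμ (by norm_num)
  have h3 : ((-1 : ℝ) : EReal) ≤ tau μ (1/2) := tau_ge_neg_one μ hμ (by norm_num)
  have hbot : tau μ (1/2) ≠ ⊥ := fun h => by rw [h, le_bot_iff] at h3; exact EReal.coe_ne_bot _ h3
  have htop : tau μ (1/2) ≠ ⊤ := fun h => by rw [h] at h2; simp at h2
  set rHalf : ℝ := (tau μ (1/2)).toReal with hrHalf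
  have hrHalfeq : tau μ (1/2) = (rHalf : EReal) := (EReal.coe_toReal htop hbot).symm
  have hrHalfle : -rHalf ≤ 1 := by
    have := EReal.toReal_le_toReal h3 (EReal.coe_ne_bot _) htop
    simp only [EReal.toReal_coe] at this
    linarith [this]
  -- generic slope bound from a real value of tau at q < 1
  have slope_bound : ∀ q : ℝ, q < 1 → ∀ r : ℝ, tau μ q = (r : EReal) →
      ∀ p : ℝ, 1 < p → (tau μ p).toReal / (p - 1) ≤ (-r) / (1 - q) := by
    intro q hq r hr p hp
    have hkey := tau_key μ hμ hq hr hp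
    obtain ⟨t, ht, ht0, htp⟩ := tau_real μ hμ hp.le
    rw [ht, EReal.coe_le_coe_iff] at hkey
    rw [ht, EReal.toReal_coe]
    rw [div_le_div_iff₀ (by linarith) (by linarith)]
    rw [le_div_iff₀ (by linarith)] at hkey
    nlinarith [hkey]
  -- S is nonempty and bounded above
  have hSne : S.Nonempty := ⟨(tau μ 2).toReal / (2 - 1), ⟨2, by norm_num, rfl⟩⟩
  have hSbdd : BddAbove S := by
    refine ⟨(-rHalf) / (1 - 1/2), ?_⟩
    rintro x ⟨p, hp, rfl⟩
    exact slope_bound (1/2) (by norm_num) rHalf hrHalfeq p hp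
  set α : ℝ := sSup S with hα
  have hαmem : ∀ p : ℝ, 1 < p → (tau μ p).toReal / (p - 1) ≤ α :=
    fun p hp => le_csSup hSbdd ⟨p, hp, rfl⟩
  have hα0 : 0 ≤ α := by
    obtain ⟨t, ht, ht0, _⟩ := tau_real μ hμ (by norm_num : (1:ℝ) ≤ 2)
    have := hαmem 2 (by norm_num)
    rw [ht, EReal.toReal_coe] at this
    norm_num at this
    linarith
  -- main claim : tau μ q ≤ (q - 1) * α for all q
  have main : ∀ q : ℝ, tau μ q ≤ (((q - 1) * α : ℝ) : EReal) := by
    intro q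
    rcases lt_trichotomy q 1 with hq | hq | hq
    · by_cases hb : tau μ q = ⊥
      · rw [hb]; exact bot_le
      · have hq0 : tau μ q ≤ 0 := tau_nonpos μ hμ hq.le
        have hqt : tau μ q ≠ ⊤ := fun h => by rw [h] at hq0; simp at hq0
        set r : ℝ := (tau μ q).toReal with hr
        have hreq : tau μ q = (r : EReal) := (EReal.coe_toReal hqt hb).symm
        have hub : α ≤ (-r) / (1 - q) := by
          refine csSup_le hSne ?_
          rintro x ⟨p, hp, rfl⟩
          exact slope_bound q hq r hreq p hp
        rw [hreq, EReal.coe_le_coe_iff]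
        rw [le_div_iff₀ (by linarith)] at hub
        nlinarith [hub]
    · subst hq
      rw [tau_one μ hμ]
      norm_num
    · obtain ⟨t, ht, ht0, _⟩ := tau_real μ hμ hq.le
      have := hαmem q hq
      rw [ht, EReal.toReal_coe, div_le_iff₀ (by linarith)] at this
      rw [ht, EReal.coe_le_coe_iff]
      linarith [this]
  refine ⟨α, hα0, le_antisymm ?_ ?_⟩
  · -- legendre ≤ α, via q = 1
    have h1 : legendre μ α ≤ ((1 * α : ℝ) : EReal) - tau μ 1 := iInf_le _ 1
    rw [tau_one μ hμ] at h1
    simpa using h1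
  · -- α ≤ legendre
    refine le_iInf fun q => ?_
    have h1 : ((q * α : ℝ) : EReal) - (((q - 1) * α : ℝ) : EReal)
        ≤ ((q * α : ℝ) : EReal) - tau μ q :=
      EReal.sub_le_sub (le_refl _) (main q)
    calc (α : EReal) = ((q * α : ℝ) : EReal) - (((q - 1) * α : ℝ) : EReal) := by
          rw [← EReal.coe_sub]
          norm_cast
          ring
      _ ≤ _ := h1


/-- For every Borel probability measure `μ` on `ℝ` with `μ([0,1)) = 1` there is at
least one exponent `α ≥ 0` with `L_μ(α) = α`. -/
theorem statement14 (μ : Measure ℝ) [IsProbabilityMeasure μ]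
    (hμ : μ (Set.Ico 0 1) = 1) :
    ∃ α : ℝ, 0 ≤ α ∧ legendre μ α = (α : EReal) :=
  statement14_aux μ hμ
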